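/- After one Lüders measurement of a randomly chosen Yu–Oh projector on a Yu–Oh state, exactly 25 distinct rays can occur: the set S₁ is finite and has cardinality 25. -/

import Mathlib

open scoped InnerProductSpace

noncomputable def v : Fin 13 → EuclideanSpace ℂ (Fin 3) :=
  ![!₂[1, 0, 0], !₂[0, 1, 0], !₂[0, 0, 1],
    !₂[0, 1, -1], !₂[0, 1, 1], !₂[1, 0, -1], !₂[1, 0, 1], !₂[1, -1, 0], !₂[1, 1, 0],
    !₂[1, 1, 1], !₂[-1, 1, 1], !₂[1, -1, 1], !₂[1, 1, -1]]

noncomputable def P (i : Fin 13) (w : EuclideanSpace ℂ (Fin 3)) : EuclideanSpace ℂ (Fin 3) :=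
  (Submodule.orthogonalProjectionOnto (Submodule.span ℂ {v i}) w : EuclideanSpace ℂ (Fin 3))

noncomputable def S : ℕ → Set (Submodule ℂ (EuclideanSpace ℂ (Fin 3)))
  | 0 => {L | ∃ i : Fin 13, L = Submodule.span ℂ {v i}}
  | (n + 1) => {L | ∃ L' ∈ S n, ∃ w ∈ L', w ≠ 0 ∧ ∃ i : Fin 13,
      (P i w ≠ 0 ∧ L = Submodule.span ℂ {P i w}) ∨
      (w - P i w ≠ 0 ∧ L = Submodule.span ℂ {w - P i w})}

section Aux

def Vz : Fin 13 → Fin 3 → ℤ :=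
  ![![1, 0, 0], ![0, 1, 0], ![0, 0, 1],
    ![0, 1, -1], ![0, 1, 1], ![1, 0, -1], ![1, 0, 1], ![1, -1, 0], ![1, 1, 0],
    ![1, 1, 1], ![-1, 1, 1], ![1, -1, 1], ![1, 1, -1]]

def Uz : Fin 25 → Fin 3 → ℤ :=
  ![![1, 0, 0],
   ![0, 1, 0],
   ![0, 0, 1],
   ![0, 1, -1],
   ![0, 1, 1],
   ![1, 0, -1],
   ![1, 0, 1],
   ![1, -1, 0],
   ![1, 1, 0],
   ![1, 1, 1],
   ![-1, 1, 1],
   ![1, -1, 1],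
   ![1, 1, -1],
   ![2, -1, -1],
   ![2, 1, 1],
   ![2, 1, -1],
   ![2, -1, 1],
   ![1, -2, 1],
   ![1, 2, 1],
   ![1, 2, -1],
   ![1, -2, -1],
   ![1, 1, -2],
   ![1, 1, 2],
   ![1, -1, 2],
   ![1, -1, -2]]
def Kz : Fin 13 → Fin 13 → Fin 25 :=
  ![![0, 1, 2, 3, 4, 2, 2, 1, 1, 4, 4, 3, 3],
   ![0, 0, 2, 2, 2, 5, 6, 0, 0, 6, 5, 6, 5],
   ![0, 1, 0, 1, 1, 0, 0, 7, 8, 8, 7, 7, 8],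
   ![0, 4, 4, 0, 4, 13, 14, 13, 14, 9, 10, 0, 0],
   ![0, 3, 3, 3, 0, 15, 16, 16, 15, 0, 0, 11, 12],
   ![6, 1, 6, 17, 18, 0, 6, 17, 18, 9, 1, 11, 1],
   ![5, 1, 5, 19, 20, 5, 0, 20, 19, 1, 10, 1, 12],
   ![8, 8, 2, 21, 22, 21, 22, 0, 8, 9, 2, 2, 12],
   ![7, 7, 2, 23, 24, 24, 23, 7, 0, 2, 10, 11, 2],
   ![13, 17, 21, 3, 13, 5, 17, 7, 21, 0, 13, 17, 21],
   ![14, 19, 23, 3, 14, 19, 6, 23, 8, 14, 0, 23, 19],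
   ![15, 18, 24, 15, 4, 5, 18, 24, 8, 18, 24, 0, 15],
   ![16, 20, 22, 16, 4, 20, 6, 7, 22, 22, 20, 16, 0]]
def Az : Fin 13 → Fin 13 → ℤ :=
  ![![1, 1, 1, 1, 1, 1, 1, 1, 1, 1, 1, 1, 1],
   ![1, 1, 1, 1, 1, 1, 1, 1, 1, 1, 1, 1, 1],
   ![1, 1, 1, 1, 1, 1, 1, 1, 1, 1, 1, 1, 1],
   ![1, 1, 1, 1, 1, 1, 1, 1, 1, 1, -1, 1, 1],
   ![1, 1, 1, 1, 1, 1, 1, 1, 1, 1, 1, 1, 1],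
   ![1, 1, 1, 1, 1, 1, 1, 1, 1, 1, 1, 1, 1],
   ![1, 1, 1, 1, 1, 1, 1, 1, 1, 1, -1, 1, 1],
   ![1, 1, 1, 1, 1, 1, 1, 1, 1, 1, 1, 1, 1],
   ![1, 1, 1, 1, 1, 1, 1, 1, 1, 1, -1, 1, 1],
   ![1, 1, 1, 1, 1, 1, 1, 1, 1, 1, 1, 1, 1],
   ![1, 1, 1, 1, 1, 1, 1, 1, 1, 1, 1, 1, 1],
   ![1, 1, 1, 1, 1, 1, 1, 1, 1, 1, 1, 1, 1],
   ![1, 1, 1, 1, 1, 1, 1, 1, 1, 1, 1, 1, 1]]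
def Bz : Fin 13 → Fin 13 → ℤ :=
  ![![1, 1, 1, 1, 1, -1, 1, -1, 1, 1, 1, -1, 1],
   ![1, 1, 1, -1, 1, 1, 1, 1, 1, 1, -1, 1, 1],
   ![1, 1, 1, 1, 1, 1, 1, 1, 1, 1, -1, 1, 1],
   ![2, 1, 1, 1, 2, 1, 1, 1, 1, 2, -2, 2, 2],
   ![2, 1, -1, 2, 1, 1, 1, 1, 1, 2, -2, 2, 2],
   ![1, 2, 1, -1, 1, 1, 2, 1, 1, 2, 2, 2, 2],
   ![1, 2, -1, 1, -1, 2, 1, 1, 1, 2, -2, -2, 2],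
   ![1, 1, 2, 1, 1, 1, 1, 1, 2, 2, 2, 2, 2],
   ![1, -1, 2, -1, -1, 1, 1, 2, 1, 2, -2, 2, -2],
   ![1, -1, -1, 3, -1, 3, 1, 3, 1, 1, -2, 2, 2],
   ![1, 1, 1, 3, 1, 1, 3, 1, 3, 2, 1, 2, 2],
   ![1, 1, -1, 1, 3, 3, 1, 1, 3, 2, -2, 1, 2],
   ![1, -1, 1, -1, 3, 1, 3, 3, 1, 2, -2, 2, 1]]
def RI : Fin 25 → Fin 13 :=
  ![1, 0, 0, 0, 0, 1, 1, 2, 2, 3, 3, 4, 4, 3, 3, 4, 4, 5, 5, 6, 6, 7, 7, 8, 8]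
def RJ : Fin 25 → Fin 13 :=
  ![0, 1, 2, 3, 4, 5, 6, 7, 8, 9, 10, 11, 12, 5, 6, 5, 6, 3, 4, 3, 4, 3, 4, 3, 4]
def RA : Fin 25 → ℤ :=
  ![1, 1, 1, 1, 1, 1, 1, 1, 1, 1, -1, 1, 1, 1, 1, 1, 1, 1, 1, 1, 1, 1, 1, 1, 1]
def RB : Fin 25 → ℤ :=
  ![1, 1, 1, 1, 1, 1, 1, 1, 1, 2, -2, 2, 2, 1, 1, 1, 1, -1, 1, 1, -1, 1, 1, -1, -1]


def dz (a b : Fin 3 → ℤ) : ℤ := a 0 * b 0 + a 1 * b 1 + a 2 * b 2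

def Rz (i j : Fin 13) : Fin 3 → ℤ :=
  fun x => dz (Vz i) (Vz i) * Vz j x - dz (Vz i) (Vz j) * Vz i x

noncomputable def cE (a : Fin 3 → ℤ) : EuclideanSpace ℂ (Fin 3) := WithLp.toLp 2 fun x => (a x : ℂ)

lemma cE_ne {a : Fin 3 → ℤ} (h : a ≠ 0) : cE a ≠ 0 := by
  intro h0
  apply h
  funext x
  have := congrArg (· x) h0
  simpa [cE] using this

lemma cv {α : Type*} {n : ℕ} (x : α) (u : Fin (n+1) → α) {k : ℕ} (h : k+1 < n+2) :
    Matrix.vecCons x u ⟨k+1, h⟩ = u ⟨k, Nat.lt_of_succ_lt_succ h⟩ :=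
  Matrix.cons_val_succ' h x u

lemma v_apply (i : Fin 13) (x : Fin 3) : v i x = ((Vz i x : ℤ) : ℂ) := by
  fin_cases i <;> fin_cases x <;>
    simp only [v, Vz, cv, Matrix.cons_val_zero'] <;> norm_num

lemma v_eq (i : Fin 13) : v i = cE (Vz i) := PiLp.ext fun x => by simpa [cE] using v_apply i x

lemma inner_cE (a b : Fin 3 → ℤ) : ⟪cE a, cE b⟫_ℂ = (dz a b : ℂ) := by
  simp [cE, dz, PiLp.inner_apply, Fin.sum_univ_three, RCLike.inner_apply, map_intCast]
  try push_cast
  try ring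

lemma inner_vv (i j : Fin 13) : ⟪v i, v j⟫_ℂ = (dz (Vz i) (Vz j) : ℂ) := by
  rw [v_eq, v_eq, inner_cE]

lemma dzV_ne (i : Fin 13) : dz (Vz i) (Vz i) ≠ 0 := by revert i; decide

lemma P_eq (i : Fin 13) (w : EuclideanSpace ℂ (Fin 3)) :
    P i w = (⟪v i, w⟫_ℂ / (dz (Vz i) (Vz i) : ℂ)) • v i := by
  rw [P, ← Submodule.starProjection_apply, Submodule.starProjection_singleton, RCLike.ofReal_pow, ← inner_self_eq_norm_sq_to_K,
    inner_vv]

lemma P_smul (i : Fin 13) (t : ℂ) (w : EuclideanSpace ℂ (Fin 3)) :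
    P i (t • w) = t • P i w := by
  rw [P_eq, P_eq, inner_smul_right, smul_smul, mul_div_assoc]

lemma resid (i j : Fin 13) :
    v j - P i (v j) = ((dz (Vz i) (Vz i) : ℂ))⁻¹ • cE (Rz i j) := by
  have hd : (dz (Vz i) (Vz i) : ℂ) ≠ 0 := by
    exact_mod_cast Int.cast_ne_zero.mpr (dzV_ne i)
  have h : cE (Rz i j) = (dz (Vz i) (Vz i) : ℂ) • v j - (dz (Vz i) (Vz j) : ℂ) • v i := by
    ext x
    simp [cE, Rz, v_eq, PiLp.smul_apply, PiLp.sub_apply]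
    try push_cast
    try ring
  rw [P_eq, inner_vv, h, smul_sub, smul_smul, smul_smul, inv_mul_cancel₀ hd, one_smul,
    div_eq_inv_mul]

lemma span_smul {t : ℂ} (ht : t ≠ 0) (x : EuclideanSpace ℂ (Fin 3)) :
    Submodule.span ℂ {t • x} = Submodule.span ℂ {x} :=
  Submodule.span_singleton_smul_eq (IsUnit.mk0 t ht) x

lemma span_cE_eq {a b : Fin 3 → ℤ} {s t : ℤ} (hs : s ≠ 0) (ht : t ≠ 0)
    (h : ∀ x, s * a x = t * b x) :
    Submodule.span ℂ {cE a} = Submodule.span ℂ {cE b} := by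
  have hsc : (s : ℂ) ≠ 0 := Int.cast_ne_zero.mpr hs
  have htc : (t : ℂ) ≠ 0 := Int.cast_ne_zero.mpr ht
  have key : cE a = ((t : ℂ) / s) • cE b := by
    ext x
    have := h x
    have hc : (s : ℂ) * (a x : ℂ) = (t : ℂ) * (b x : ℂ) := by exact_mod_cast this
    simp only [cE, PiLp.smul_apply, smul_eq_mul]
    field_simp
    linear_combination hc
  rw [key, span_smul (div_ne_zero htc hsc)]

lemma cross_of_span_eq {a b : Fin 3 → ℤ} (h : Submodule.span ℂ {cE a} = Submodule.span ℂ {cE b}) :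
    ∀ x y, a x * b y = a y * b x := by
  have hm : cE a ∈ Submodule.span ℂ {cE b} := by
    rw [← h]; exact Submodule.mem_span_singleton_self _
  obtain ⟨c, hc⟩ := Submodule.mem_span_singleton.1 hm
  intro x y
  have hx : (a x : ℂ) = c * (b x : ℂ) := by
    have := congrArg (· x) hc
    simpa [cE, PiLp.smul_apply] using this.symm
  have hy : (a y : ℂ) = c * (b y : ℂ) := by
    have := congrArg (· y) hc
    simpa [cE, PiLp.smul_apply] using this.symm
  have : (a x : ℂ) * (b y : ℂ) = (a y : ℂ) * (b x : ℂ) := by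
    rw [hx, hy]; ring
  exact_mod_cast this

lemma key_fwd : ∀ i j : Fin 13, Rz i j = 0 ∨
    (Az i j ≠ 0 ∧ Bz i j ≠ 0 ∧ ∀ x, Az i j * Rz i j x = Bz i j * Uz (Kz i j) x) := by decide

lemma key_rev : ∀ k : Fin 25, RA k ≠ 0 ∧ RB k ≠ 0 ∧ Rz (RI k) (RJ k) ≠ 0 ∧
    ∀ x, RA k * Rz (RI k) (RJ k) x = RB k * Uz k x := by decide

lemma key_inj : ∀ k l : Fin 25, (∀ x y : Fin 3, Uz k x * Uz l y = Uz k y * Uz l x) → k = l := by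
  decide

lemma V_sub_U : ∀ i : Fin 13, Vz i = Uz (Fin.castLE (by norm_num) i) := by decide

lemma Vz_ne (i : Fin 13) : Vz i ≠ 0 := by revert i; decide

lemma v_ne (i : Fin 13) : v i ≠ 0 := by rw [v_eq]; exact cE_ne (Vz_ne i)

lemma S1_eq : S 1 = Set.range (fun k : Fin 25 => Submodule.span ℂ {cE (Uz k)}) := by
  ext L
  constructor
  · rintro ⟨L', ⟨j, rfl⟩, w, hw, hw0, i, hcase⟩
    obtain ⟨t, rfl⟩ := Submodule.mem_span_singleton.1 hw
    have ht : t ≠ 0 := by rintro rfl; simp at hw0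
    rcases hcase with ⟨hP, rfl⟩ | ⟨hR, rfl⟩
    · -- projection branch: span = span {v i}
      refine ⟨Fin.castLE (by norm_num) i, ?_⟩
      rw [P_smul] at hP ⊢
      have hPv : P i (v j) ≠ 0 := by
        intro h; rw [h, smul_zero] at hP; exact hP rfl
      have hq : (⟪v i, v j⟫_ℂ / (dz (Vz i) (Vz i) : ℂ)) ≠ 0 := by
        intro h; apply hPv; rw [P_eq, h, zero_smul]
      rw [span_smul ht, P_eq, span_smul hq, v_eq, V_sub_U]
    · -- residual branch
      have hsub : t • v j - P i (t • v j) = t • (v j - P i (v j)) := by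
        rw [P_smul, smul_sub]
      rw [hsub] at hR ⊢
      have hvr : v j - P i (v j) ≠ 0 := by
        intro h; rw [h, smul_zero] at hR; exact hR rfl
      rw [resid] at hvr
      have hd : ((dz (Vz i) (Vz i) : ℂ))⁻¹ ≠ 0 :=
        inv_ne_zero (Int.cast_ne_zero.mpr (dzV_ne i))
      have hRz : Rz i j ≠ 0 := by
        intro h
        apply hvr
        rw [h]
        rw [smul_eq_zero]
        right
        ext x
        simp [cE]
      rcases key_fwd i j with h | ⟨ha, hb, hab⟩
      · exact absurd h hRz
      · refine ⟨Kz i j, ?_⟩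
        rw [span_smul ht, resid, span_smul hd]
        exact (span_cE_eq ha hb hab).symm
  · rintro ⟨k, rfl⟩
    obtain ⟨ha, hb, hRz, hab⟩ := key_rev k
    refine ⟨Submodule.span ℂ {v (RJ k)}, ⟨RJ k, rfl⟩, v (RJ k),
      Submodule.mem_span_singleton_self _, v_ne _, RI k, Or.inr ⟨?_, ?_⟩⟩
    · rw [resid]
      exact smul_ne_zero (inv_ne_zero (Int.cast_ne_zero.mpr (dzV_ne _))) (cE_ne hRz)
    · rw [resid, span_smul (inv_ne_zero (Int.cast_ne_zero.mpr (dzV_ne _)))]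
      exact (span_cE_eq ha hb hab).symm

lemma u_inj : Function.Injective (fun k : Fin 25 => Submodule.span ℂ {cE (Uz k)}) := by
  intro k l h
  exact key_inj k l (cross_of_span_eq h)

end Aux

theorem S1_card : (S 1).Finite ∧ (S 1).ncard = 25 := by
  rw [S1_eq]
  refine ⟨Set.finite_range _, ?_⟩
  rw [← Nat.card_coe_set_eq, Nat.card_range_of_injective u_inj]
  simp
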